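/- Let x = lim_{n→∞} στσ²τ⋯σⁿτ(aaa⋯) ∈ A^ℕ. Then x is a primitive S-adic sequence over S = {σ,τ}, but x is not linearly recurrent. -/

import Mathlib

namespace DurandLR

variable {A B : Type*}

/-- `u` occurs at position `i` in the one-sided sequence `x`. -/
def OccursAt (x : ℕ → A) (u : List A) (i : ℕ) : Prop :=
  ∀ k : Fin u.length, x (i + (k : ℕ)) = u.get k

/-- `u` occurs (somewhere) in the one-sided sequence `x`. -/
def Occurs (x : ℕ → A) (u : List A) : Prop := ∃ i, OccursAt x u i

/-- `u` occurs at position `i` in the two-sided sequence `x`. -/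
def OccursAtZ (x : ℤ → A) (u : List A) (i : ℤ) : Prop :=
  ∀ k : Fin u.length, x (i + (k : ℕ)) = u.get k

def OccursZ (x : ℤ → A) (u : List A) : Prop := ∃ i, OccursAtZ x u i

/-- The word `u` has exactly `m` occurrences in the finite word `w`. -/
def OccCountEq (u w : List A) (m : ℕ) : Prop :=
  {i : ℕ | u <+: w.drop i}.ncard = m

/-- `w` is a return word to `u` in the one-sided sequence `x`: `wu` occurs in `x`,
`u` is a prefix of `wu` and `u` has exactly two occurrences in `wu`. -/
def IsReturnWord (x : ℕ → A) (u w : List A) : Prop :=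
  Occurs x (w ++ u) ∧ u <+: (w ++ u) ∧ OccCountEq u (w ++ u) 2

/-- `w` is a return word to `u` in the two-sided sequence `x`. -/
def IsReturnWordZ (x : ℤ → A) (u w : List A) : Prop :=
  OccursZ x (w ++ u) ∧ u <+: (w ++ u) ∧ OccCountEq u (w ++ u) 2

/-- `x` is uniformly recurrent: every word occurring in `x` occurs with bounded gaps. -/
def UniformlyRecurrent (x : ℕ → A) : Prop :=
  ∀ u, Occurs x u → ∃ M : ℕ, ∀ i : ℕ, ∃ j, i ≤ j ∧ j < i + M ∧ OccursAt x u j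

def UniformlyRecurrentZ (x : ℤ → A) : Prop :=
  ∀ u, OccursZ x u → ∃ M : ℕ, ∀ i : ℤ, ∃ j : ℤ, i ≤ j ∧ j < i + M ∧ OccursAtZ x u j

/-- `x` is linearly recurrent with constant `K`. -/
def LinearlyRecurrentWith (x : ℕ → A) (K : ℕ) : Prop :=
  UniformlyRecurrent x ∧ ∀ u w, IsReturnWord x u w → w.length ≤ K * u.length

def LinearlyRecurrent (x : ℕ → A) : Prop := ∃ K, LinearlyRecurrentWith x K

def LinearlyRecurrentZ (x : ℤ → A) : Prop :=
  UniformlyRecurrentZ x ∧ ∃ K : ℕ, ∀ u w, IsReturnWordZ x u w → w.length ≤ K * u.length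

/-- The subshift generated by a two-sided sequence `x` : all `z` whose finite subwords
occur in `x`. -/
def SubshiftGenZ (x : ℤ → A) : Set (ℤ → A) := {z | ∀ u, OccursZ z u → OccursZ x u}

/-- The subshift generated by a one-sided sequence `x`. -/
def SubshiftGen (x : ℕ → A) : Set (ℤ → A) := {z | ∀ u, OccursZ z u → Occurs x u}

/-- A minimal subshift: nonempty and every element generates it. -/
def IsMinimalSubshift (X : Set (ℤ → A)) : Prop :=
  X.Nonempty ∧ ∀ z ∈ X, X = SubshiftGenZ z

/-- A linearly recurrent subshift: minimal and containing an LR sequence. -/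
def IsLRSubshift (X : Set (ℤ → A)) : Prop :=
  IsMinimalSubshift X ∧ ∃ x ∈ X, LinearlyRecurrentZ x

def IsPeriodic (z : ℤ → A) : Prop := ∃ p : ℕ, 0 < p ∧ ∀ n : ℤ, z (n + p) = z n

/-- Image of a finite word under a morphism (substitution). -/
def wordMap (σ : A → List B) : List A → List B
  | [] => []
  | a :: u => σ a ++ wordMap σ u

/-- Composition of two morphisms: `compM σ τ = σ ∘ τ`. -/
def compM (σ τ : A → List A) : A → List A := fun b => wordMap σ (τ b)

/-- Iterate of a morphism: `powM σ n = σ^n`. -/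
def powM (σ : A → List A) : ℕ → A → List A
  | 0 => fun b => [b]
  | n + 1 => compM σ (powM σ n)

/-- `chain σ r n = σ_r ∘ σ_{r+1} ∘ ⋯ ∘ σ_{r+n-1}` (the empty composition for `n = 0`). -/
def chain (σ : ℕ → A → List A) (r : ℕ) : ℕ → A → List A
  | 0 => fun b => [b]
  | n + 1 => fun b => wordMap (chain σ r n) (σ (r + n) b)

/-- The periodic infinite sequence `www⋯` obtained by repeating the word `w`
(with a default letter for the degenerate empty case). -/
def repSeq (w : List A) (d : A) : ℕ → A := fun i => w.getD (i % w.length) d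

/-- The prefix of length `n` of the sequence `x`, as a word. -/
def seqTake (x : ℕ → A) (n : ℕ) : List A := (List.range n).map x

/-- `y` is the image of the infinite sequence `z` under the morphism `σ`:
the image of every prefix of `z` is a prefix of `y`. -/
def IsSeqImage (σ : A → List B) (z : ℕ → A) (y : ℕ → B) : Prop :=
  ∀ n, seqTake y (wordMap σ (seqTake z n)).length = wordMap σ (seqTake z n)

/-- `σ_0 σ_1 ⋯ σ_n (aaa⋯)` converges to `x` in the product topology, where the `n`-th
approximation is the periodic sequence obtained by repeating the word `W n`. -/
def ConvergesTo (W : ℕ → List A) (d : A) (x : ℕ → A) : Prop :=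
  ∀ m, ∃ N, ∀ n ≥ N, repSeq (W n) d m = x m

/-- A proper morphism: all images begin with the same letter and end with the same letter. -/
def ProperMorphism (σ : A → List A) : Prop :=
  ∃ l r : A, ∀ b, (σ b).head? = some l ∧ (σ b).getLast? = some r

/-- Primitivity with constant `s₀` of a directive sequence of morphisms
`σ_n : A_{n+1} → A_n^*`: every `b ∈ A_r` occurs in `σ_{r+1} ⋯ σ_{r+s₀} (c)`
for every `c ∈ A_{r+s₀+1}`. -/
def PrimitiveWith (σ : ℕ → A → List A) (Aseq : ℕ → Set A) (s0 : ℕ) : Prop :=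
  ∀ r : ℕ, ∀ b ∈ Aseq r, ∀ c ∈ Aseq (r + s0 + 1), b ∈ chain σ (r + 1) s0 c

/-- The data of an S-adic system: `a` belongs to every alphabet and
`σ_n` maps `A_{n+1}` into words over `A_n`. -/
def SAdicSystem (σ : ℕ → A → List A) (Aseq : ℕ → Set A) (a : A) : Prop :=
  (∀ n, a ∈ Aseq n) ∧ (∀ n, ∀ b ∈ Aseq (n + 1), ∀ c ∈ σ n b, c ∈ Aseq n)

/-- `x` is the S-adic sequence generated by the directive sequence `σ` and letter `a`:
`σ_0 σ_1 ⋯ σ_n (aaa⋯)` converges to `x`. -/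
def GeneratesSAdic (σ : ℕ → A → List A) (Aseq : ℕ → Set A) (a : A) (x : ℕ → A) : Prop :=
  SAdicSystem σ Aseq a ∧ ConvergesTo (fun n => chain σ 0 (n + 1) a) a x

/-- The complexity function `p_x(n)`: the number of distinct words of length `n`
occurring in `x`. -/
noncomputable def complexity (x : ℕ → A) (n : ℕ) : ℕ := {u : List A | u.length = n ∧ Occurs x u}.ncard

/-- Any two successive occurrences of `u` in `x` differ by at most `M`. -/
def GapsBoundedBy (x : ℕ → A) (u : List A) (M : ℕ) : Prop :=
  ∀ i j, OccursAt x u i → OccursAt x u j → i < j →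
    (∀ k, i < k → k < j → ¬ OccursAt x u k) → j - i ≤ M

/-- The finite word `x_{[p,q)}` of a two-sided sequence. -/
def zSeg (x : ℤ → A) (p q : ℤ) : List A := (List.range (q - p).toNat).map fun t => x (p + t)

/-- `w` is a return word to `u.v` in the two-sided sequence `x`: there are two
consecutive occurrences `j < k` of `uv` in `x` with `w = x_{[j+|u|, k+|u|)}`. -/
def IsReturnWordUV (x : ℤ → A) (u v w : List A) : Prop :=
  ∃ j k : ℤ, OccursAtZ x (u ++ v) j ∧ OccursAtZ x (u ++ v) k ∧ j < k ∧
    (∀ i : ℤ, j < i → i < k → ¬ OccursAtZ x (u ++ v) i) ∧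
    w = zSeg x (j + u.length) (k + u.length)

/-- The substitution `σ` on `{a,b,c} = {0,1,2}`: `σ(a)=acb`, `σ(b)=bab`, `σ(c)=cbc`. -/
def sigma3 : Fin 3 → List (Fin 3) := ![[0, 2, 1], [1, 0, 1], [2, 1, 2]]

/-- The substitution `τ` on `{a,b,c} = {0,1,2}`: `τ(a)=abc`, `τ(b)=acb`, `τ(c)=aac`. -/
def tau3 : Fin 3 → List (Fin 3) := ![[0, 1, 2], [0, 2, 1], [0, 0, 2]]

/-- `rho n = σ τ σ² τ ⋯ σⁿ τ` (identity for `n = 0`). -/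
def rho : ℕ → Fin 3 → List (Fin 3)
  | 0 => fun b => [b]
  | n + 1 => compM (rho n) (compM (powM sigma3 (n + 1)) tau3)

/-- `psi n l = σ^{n+2} τ σ^{n+3} τ ⋯ σ^{n+l+1} τ` (identity for `l = 0`). -/
def psi (n : ℕ) : ℕ → Fin 3 → List (Fin 3)
  | 0 => fun b => [b]
  | l + 1 => compM (psi n l) (compM (powM sigma3 (n + 2 + l)) tau3)

/-- The Sturmian substitution `τ` on `{0,1}`: `τ(0)=0`, `τ(1)=10`. -/
def tau2 : Fin 2 → List (Fin 2) := ![[0], [1, 0]]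

/-- The Sturmian substitution `σ` on `{0,1}`: `σ(0)=01`, `σ(1)=1`. -/
def sigma2 : Fin 2 → List (Fin 2) := ![[0, 1], [1]]

/-- `xi i k = τ^{i₁} σ^{i₂} τ^{i₃} ⋯ τ^{i_{2k-1}} σ^{i_{2k}}` (identity for `k = 0`). -/
def xi (i : ℕ → ℕ) : ℕ → Fin 2 → List (Fin 2)
  | 0 => fun b => [b]
  | k + 1 => compM (xi i k) (compM (powM tau2 (i (2 * k + 1))) (powM sigma2 (i (2 * k + 2))))

/-- `a : ℕ → ℕ` gives (from index 1 on) the continued fraction expansion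
`α = [0; a₁, a₂, a₃, …]`, expressed through the Gauss map. -/
def IsCFExpansion (α : ℝ) (a : ℕ → ℕ) : Prop :=
  ∃ β : ℕ → ℝ, β 0 = α ∧ ∀ n : ℕ,
    0 < β n ∧ β n < 1 ∧ (a (n + 1) : ℤ) = ⌊1 / β n⌋ ∧ β (n + 1) = 1 / β n - ⌊1 / β n⌋

/-! ### Auxiliary machinery -/

section Aux

open List

lemma wordMap_nil (σ : A → List B) : wordMap σ ([] : List A) = [] := rfl

lemma wordMap_cons (σ : A → List B) (a : A) (u : List A) :
    wordMap σ (a :: u) = σ a ++ wordMap σ u := rfl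

lemma wordMap_append (σ : A → List B) (u v : List A) :
    wordMap σ (u ++ v) = wordMap σ u ++ wordMap σ v := by
  induction u with
  | nil => rfl
  | cons a u ih => simp [wordMap_cons, ih]

lemma wordMap_one (u : List A) : wordMap (fun b => [b]) u = u := by
  induction u with
  | nil => rfl
  | cons a u ih => simp [wordMap_cons, ih]

lemma wordMap_compM (σ τ : A → List A) (u : List A) :
    wordMap (compM σ τ) u = wordMap σ (wordMap τ u) := by
  induction u with
  | nil => rfl
  | cons a u ih => simp [wordMap_cons, compM, ih, wordMap_append]

/-- `σ` is uniform of length `L`. -/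
def UnifM (σ : A → List B) (L : ℕ) : Prop := ∀ d, (σ d).length = L

lemma length_wordMap {σ : A → List B} {L : ℕ} (h : UnifM σ L) (u : List A) :
    (wordMap σ u).length = L * u.length := by
  induction u with
  | nil => simp [wordMap_nil]
  | cons a u ih => simp [wordMap_cons, h a, ih, Nat.mul_succ]; ring

lemma wordMap_drop {σ : A → List B} {L : ℕ} (h : UnifM σ L) (u : List A) (j : ℕ) :
    wordMap σ (u.drop j) = (wordMap σ u).drop (L * j) := by
  induction u generalizing j with
  | nil => simp [wordMap_nil]
  | cons a u ih =>
    cases j with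
    | zero => simp
    | succ j =>
      have hL : L * (j + 1) = (σ a).length + L * j := by rw [h a]; ring
      rw [List.drop_succ_cons, ih, wordMap_cons, hL, List.drop_append]; simp

lemma prefix_wordMap (σ : A → List B) {u v : List A} (h : u <+: v) :
    wordMap σ u <+: wordMap σ v := by
  obtain ⟨t, rfl⟩ := h
  exact ⟨wordMap σ t, (wordMap_append σ u t).symm⟩

lemma compM_assoc (f g h : A → List A) : compM (compM f g) h = compM f (compM g h) := by
  funext b
  simp [compM, wordMap_compM]

lemma compM_unit_right (f : A → List A) : compM f (fun b => [b]) = f := by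
  funext b
  simp [compM, wordMap_cons, wordMap_nil]

lemma compM_unit_left (f : A → List A) : compM (fun b => [b]) f = f := by
  funext b
  exact wordMap_one (f b)

lemma powM_succ_right (f : A → List A) (p : ℕ) :
    powM f (p + 1) = compM (powM f p) f := by
  induction p with
  | zero => show compM f (fun b => [b]) = compM (fun b => [b]) f
            rw [compM_unit_right, compM_unit_left]
  | succ p ih =>
    show compM f (powM f (p+1)) = _
    rw [ih, ← compM_assoc, ← ih]
    rfl

/- getD helpers, specialized to `Fin 3` with default `0`. -/

lemma getD_drop' (w : List (Fin 3)) (p i : ℕ) :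
    (w.drop p).getD i 0 = w.getD (p + i) 0 := by
  simp [List.getD_eq_getElem?_getD, List.getElem?_drop]

lemma getD_append_lt (u v : List (Fin 3)) (i : ℕ) (h : i < u.length) :
    (u ++ v).getD i 0 = u.getD i 0 := by
  simp [List.getD_eq_getElem?_getD, List.getElem?_append_left h]

lemma prefix_getD {u v : List (Fin 3)} (h : u <+: v) {i : ℕ} (hi : i < u.length) :
    v.getD i 0 = u.getD i 0 := by
  obtain ⟨t, rfl⟩ := h
  exact getD_append_lt u t i hi

/-- Pointwise characterization of an occurrence of `u` at position `p` in `w`. -/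
lemma occ_iff {u w : List (Fin 3)} {p : ℕ} (hu : u ≠ []) :
    u <+: w.drop p ↔
      p + u.length ≤ w.length ∧ ∀ i < u.length, w.getD (p + i) 0 = u.getD i 0 := by
  constructor
  · intro h
    have hl := h.length_le
    rw [List.length_drop] at hl
    have hu' : 0 < u.length := List.length_pos_iff.2 hu
    refine ⟨by omega, fun i hi => ?_⟩
    rw [← getD_drop']
    exact prefix_getD h hi
  · rintro ⟨hlen, hpt⟩
    have hu' : 0 < u.length := List.length_pos_iff.2 hu
    have heq : u = (w.drop p).take u.length := by
      apply List.ext_getElem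
      · simp [List.length_take, List.length_drop]; omega
      · intro i h1 h2
        have hi : i < u.length := h1
        have hpi : p + i < w.length := by omega
        have := hpt i hi
        rw [List.getD_eq_getElem _ _ hpi, List.getD_eq_getElem _ _ hi] at this
        simp only [List.getElem_take, List.getElem_drop]
        exact this.symm
    rw [heq]
    exact List.take_prefix _ _

end Aux
section Recognizability

open List

/-- `getD` of the image word in terms of a single block. -/
lemma getD_one_block {φ : Fin 3 → List (Fin 3)} (hu : UnifM φ 3) {W : List (Fin 3)} {q : ℕ}
    (hq : q < W.length) {t : ℕ} (ht : t < 3) :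
    (wordMap φ W).getD (3 * q + t) 0 = (φ (W.getD q 0)).getD t 0 := by
  have hdq : W.drop q = W[q] :: W.drop (q + 1) := List.drop_eq_getElem_cons hq
  calc (wordMap φ W).getD (3 * q + t) 0
      = ((wordMap φ W).drop (3 * q)).getD t 0 := (getD_drop' _ _ _).symm
    _ = (wordMap φ (W.drop q)).getD t 0 := by rw [wordMap_drop hu]
    _ = (φ W[q] ++ wordMap φ (W.drop (q+1))).getD t 0 := by rw [hdq, wordMap_cons]
    _ = (φ W[q]).getD t 0 := getD_append_lt _ _ _ (by rw [hu]; exact ht)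
    _ = (φ (W.getD q 0)).getD t 0 := by rw [List.getD_eq_getElem _ _ hq]

/-- `getD` of the image word in terms of three consecutive blocks. -/
lemma getD_three_block {φ : Fin 3 → List (Fin 3)} (hu : UnifM φ 3) {W : List (Fin 3)} {q : ℕ}
    (hq : q + 3 ≤ W.length) {t : ℕ} (ht : t < 9) :
    (wordMap φ W).getD (3 * q + t) 0 =
      (wordMap φ [W.getD q 0, W.getD (q+1) 0, W.getD (q+2) 0]).getD t 0 := by
  have h0 : q < W.length := by omega
  have h1 : q + 1 < W.length := by omega
  have h2 : q + 2 < W.length := by omega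
  have hdq : W.drop q = W[q] :: W[q+1] :: W[q+2] :: W.drop (q + 3) := by
    rw [List.drop_eq_getElem_cons h0, List.drop_eq_getElem_cons h1, List.drop_eq_getElem_cons h2]
  have hpre : [W.getD q 0, W.getD (q+1) 0, W.getD (q+2) 0] <+: W.drop q := by
    rw [hdq, List.getD_eq_getElem _ _ h0, List.getD_eq_getElem _ _ h1, List.getD_eq_getElem _ _ h2]
    exact ⟨W.drop (q+3), rfl⟩
  calc (wordMap φ W).getD (3 * q + t) 0
      = ((wordMap φ W).drop (3 * q)).getD t 0 := (getD_drop' _ _ _).symm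
    _ = (wordMap φ (W.drop q)).getD t 0 := by rw [wordMap_drop hu]
    _ = (wordMap φ [W.getD q 0, W.getD (q+1) 0, W.getD (q+2) 0]).getD t 0 := by
        refine prefix_getD (prefix_wordMap φ hpre) ?_
        rw [length_wordMap hu]
        simpa using ht

lemma unif_sigma3 : UnifM sigma3 3 := fun d => by fin_cases d <;> rfl

lemma unif_tau3 : UnifM tau3 3 := fun d => by fin_cases d <;> rfl

lemma letter_inj {φ : Fin 3 → List (Fin 3)} (hφ : φ = sigma3 ∨ φ = tau3) :
    ∀ d e : Fin 3, φ d = φ e → d = e := by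
  rcases hφ with h | h <;> subst h <;> decide

lemma wordMap_prefix_reflect {φ : Fin 3 → List (Fin 3)} (hφ : φ = sigma3 ∨ φ = tau3) :
    ∀ (Z V : List (Fin 3)), wordMap φ Z <+: wordMap φ V → Z.length ≤ V.length → Z <+: V := by
  have hu : UnifM φ 3 := by rcases hφ with h | h <;> subst h <;> first | exact unif_sigma3 | exact unif_tau3
  intro Z
  induction Z with
  | nil => exact fun V _ _ => List.nil_prefix
  | cons z Z ih =>
    intro V h hl
    cases V with
    | nil => simp at hl
    | cons v V' =>
      rw [wordMap_cons, wordMap_cons] at h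
      have h1 : φ z <+: φ v ++ wordMap φ V' := (List.prefix_append _ _).trans h
      have h2 : φ v <+: φ v ++ wordMap φ V' := List.prefix_append _ _
      have heq : φ z = φ v :=
        (List.prefix_of_prefix_length_le h1 h2 (by rw [hu z, hu v])).eq_of_length
          (by rw [hu z, hu v])
      have hz : z = v := letter_inj hφ _ _ heq
      subst hz
      rw [heq] at h
      obtain ⟨t, ht⟩ := h
      rw [List.append_assoc] at ht
      have hc : wordMap φ V' = wordMap φ Z ++ t := List.append_cancel_left ht.symm
      exact List.cons_prefix_cons.mpr ⟨rfl, ih V' ⟨t, hc.symm⟩ (by simpa using hl)⟩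

/-- Full recognizability of a uniform morphism. -/
def Recog (φ : Fin 3 → List (Fin 3)) (L : ℕ) : Prop :=
  UnifM φ L ∧ ∀ (W Z : List (Fin 3)) (p : ℕ), 2 ≤ Z.length →
    wordMap φ Z <+: (wordMap φ W).drop p → ∃ j, p = L * j ∧ Z <+: W.drop j

lemma recogBase {φ : Fin 3 → List (Fin 3)} (hφ : φ = sigma3 ∨ φ = tau3) : Recog φ 3 := by
  have hu : UnifM φ 3 := by
    rcases hφ with h | h <;> subst h <;> first | exact unif_sigma3 | exact unif_tau3
  refine ⟨hu, ?_⟩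
  intro W Z p hZ h
  obtain ⟨z0, z1, Z', rfl⟩ : ∃ z0 z1 Z', Z = z0 :: z1 :: Z' := by
    match Z, hZ with | z0 :: z1 :: Z', _ => exact ⟨_, _, _, rfl⟩
  set Z := z0 :: z1 :: Z' with hZdef
  have hZne : wordMap φ Z ≠ [] := by
    have h3 := length_wordMap hu Z
    intro h0; rw [h0] at h3; simp [hZdef] at h3
  have h' := (occ_iff hZne).mp h
  obtain ⟨hlen, hpt⟩ := h'
  have hwzl : (wordMap φ Z).length = 3 * Z.length := length_wordMap hu Z
  rw [length_wordMap hu, length_wordMap hu] at hlen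
  have hZlen : Z.length = Z'.length + 2 := by simp [hZdef]
  have hp : 3 * (p / 3) + p % 3 = p := Nat.div_add_mod p 3
  have hr3 : p % 3 < 3 := Nat.mod_lt _ (by norm_num)
  set q := p / 3
  set r := p % 3
  have hz6 : ∀ t < 6, (wordMap φ W).getD (p + t) 0 = (wordMap φ [z0, z1]).getD t 0 := by
    intro t ht
    have h1 := hpt t (by rw [hwzl]; omega)
    rw [h1]
    have hpre : wordMap φ [z0, z1] <+: wordMap φ Z :=
      prefix_wordMap φ ⟨Z', by simp [hZdef]⟩
    exact prefix_getD hpre (by rw [length_wordMap hu]; simpa using ht)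
  rcases (by omega : r = 0 ∨ r = 1 ∨ r = 2) with hr | hr | hr
  · -- aligned
    have hp0 : p = 3 * q := by omega
    rw [hp0, ← wordMap_drop hu] at h
    refine ⟨q, hp0, wordMap_prefix_reflect hφ _ _ h ?_⟩
    rw [List.length_drop]; omega
  all_goals {
    exfalso
    have hq3 : q + 3 ≤ W.length := by omega
    have hk : ∀ t < 6,
        (wordMap φ [W.getD q 0, W.getD (q+1) 0, W.getD (q+2) 0]).getD (r + t) 0 =
          (wordMap φ [z0, z1]).getD t 0 := by
      intro t ht
      rw [← getD_three_block hu hq3 (by omega)]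
      rw [show 3 * q + (r + t) = p + t by omega]
      exact hz6 t ht
    have hdec : ∀ w0 w1 w2 y0 y1 : Fin 3,
        (¬ ∀ t : Fin 6, (wordMap φ [w0, w1, w2]).getD (1 + (t : ℕ)) 0 =
            (wordMap φ [y0, y1]).getD (t : ℕ) 0) ∧
        (¬ ∀ t : Fin 6, (wordMap φ [w0, w1, w2]).getD (2 + (t : ℕ)) 0 =
            (wordMap φ [y0, y1]).getD (t : ℕ) 0) := by
      rcases hφ with h | h <;> subst h <;> decide
    rw [hr] at hk
    first
      | exact (hdec (W.getD q 0) (W.getD (q+1) 0) (W.getD (q+2) 0) z0 z1).1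
          (fun t => hk t t.isLt)
      | exact (hdec (W.getD q 0) (W.getD (q+1) 0) (W.getD (q+2) 0) z0 z1).2
          (fun t => hk t t.isLt)
  }

end Recognizability
section Marker

open List

/-- Occurrences of `ca = [2,0]` in a `σ`-image are aligned at block position `2`. -/
lemma caL_sigma {W : List (Fin 3)} {p : ℕ} (h : [2, 0] <+: (wordMap sigma3 W).drop p) :
    ∃ j, p = 3 * j + 2 ∧ [2, 0] <+: W.drop j := by
  have hu := unif_sigma3
  rw [occ_iff (by simp)] at h
  obtain ⟨hlen, hpt⟩ := h
  rw [length_wordMap hu] at hlen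
  simp only [List.length_cons, List.length_nil] at hlen
  have h0 := hpt 0 (by norm_num)
  have h1 := hpt 1 (by norm_num)
  have hp : 3 * (p / 3) + p % 3 = p := Nat.div_add_mod p 3
  have hr3 : p % 3 < 3 := Nat.mod_lt _ (by norm_num)
  set q := p / 3
  set r := p % 3
  have hq : q < W.length := by omega
  rcases (by omega : r = 0 ∨ r = 1 ∨ r = 2) with hr | hr | hr
  · exfalso
    have e0 : (sigma3 (W.getD q 0)).getD 0 0 = 2 := by
      rw [← getD_one_block hu hq (by norm_num : (0:ℕ) < 3), show 3 * q + 0 = p + 0 by omega]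
      exact h0
    have e1 : (sigma3 (W.getD q 0)).getD 1 0 = 0 := by
      rw [← getD_one_block hu hq (by norm_num : (1:ℕ) < 3), show 3 * q + 1 = p + 1 by omega]
      exact h1
    exact (by decide : ∀ d : Fin 3, ¬((sigma3 d).getD 0 0 = 2 ∧ (sigma3 d).getD 1 0 = 0))
      (W.getD q 0) ⟨e0, e1⟩
  · exfalso
    have e0 : (sigma3 (W.getD q 0)).getD 1 0 = 2 := by
      rw [← getD_one_block hu hq (by norm_num : (1:ℕ) < 3), show 3 * q + 1 = p + 0 by omega]
      exact h0
    have e1 : (sigma3 (W.getD q 0)).getD 2 0 = 0 := by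
      rw [← getD_one_block hu hq (by norm_num : (2:ℕ) < 3), show 3 * q + 2 = p + 1 by omega]
      exact h1
    exact (by decide : ∀ d : Fin 3, ¬((sigma3 d).getD 1 0 = 2 ∧ (sigma3 d).getD 2 0 = 0))
      (W.getD q 0) ⟨e0, e1⟩
  · have hq1 : q + 1 < W.length := by omega
    have e0 : (sigma3 (W.getD q 0)).getD 2 0 = 2 := by
      rw [← getD_one_block hu hq (by norm_num : (2:ℕ) < 3), show 3 * q + 2 = p + 0 by omega]
      exact h0
    have e1 : (sigma3 (W.getD (q+1) 0)).getD 0 0 = 0 := by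
      rw [← getD_one_block hu hq1 (by norm_num : (0:ℕ) < 3), show 3 * (q+1) + 0 = p + 1 by omega]
      exact h1
    have hWq : W.getD q 0 = 2 :=
      (by decide : ∀ d : Fin 3, (sigma3 d).getD 2 0 = 2 → d = 2) _ e0
    have hWq1 : W.getD (q+1) 0 = 0 :=
      (by decide : ∀ d : Fin 3, (sigma3 d).getD 0 0 = 0 → d = 0) _ e1
    refine ⟨q, by omega, ?_⟩
    rw [occ_iff (by simp)]
    constructor
    · simp only [List.length_cons, List.length_nil]; omega
    · intro i hi
      simp only [List.length_cons, List.length_nil] at hi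
      interval_cases i
      · simpa using hWq
      · simpa using hWq1

/-- Occurrences of `ca = [2,0]` in a `τ`-image are at position `2 (mod 3)`. -/
lemma caL_tau {W : List (Fin 3)} {p : ℕ} (h : [2, 0] <+: (wordMap tau3 W).drop p) :
    p % 3 = 2 := by
  have hu := unif_tau3
  rw [occ_iff (by simp)] at h
  obtain ⟨hlen, hpt⟩ := h
  rw [length_wordMap hu] at hlen
  simp only [List.length_cons, List.length_nil] at hlen
  have h0 := hpt 0 (by norm_num)
  have h1 := hpt 1 (by norm_num)
  have hp : 3 * (p / 3) + p % 3 = p := Nat.div_add_mod p 3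
  have hr3 : p % 3 < 3 := Nat.mod_lt _ (by norm_num)
  set q := p / 3
  set r := p % 3
  have hq : q < W.length := by omega
  rcases (by omega : r = 0 ∨ r = 1 ∨ r = 2) with hr | hr | hr
  · exfalso
    have e0 : (tau3 (W.getD q 0)).getD 0 0 = 2 := by
      rw [← getD_one_block hu hq (by norm_num : (0:ℕ) < 3), show 3 * q + 0 = p + 0 by omega]
      exact h0
    exact (by decide : ∀ d : Fin 3, ¬(tau3 d).getD 0 0 = 2) _ e0
  · exfalso
    have e0 : (tau3 (W.getD q 0)).getD 1 0 = 2 := by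
      rw [← getD_one_block hu hq (by norm_num : (1:ℕ) < 3), show 3 * q + 1 = p + 0 by omega]
      exact h0
    have e1 : (tau3 (W.getD q 0)).getD 2 0 = 0 := by
      rw [← getD_one_block hu hq (by norm_num : (2:ℕ) < 3), show 3 * q + 2 = p + 1 by omega]
      exact h1
    exact (by decide : ∀ d : Fin 3, ¬((tau3 d).getD 1 0 = 2 ∧ (tau3 d).getD 2 0 = 0))
      (W.getD q 0) ⟨e0, e1⟩
  · exact hr

/-- Forward: `ca` at `j` in `W` gives `ca` at `3j+2` in `σ(W)`. -/
lemma ca_fwd_sigma {W : List (Fin 3)} {j : ℕ} (h : [2, 0] <+: W.drop j) :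
    [2, 0] <+: (wordMap sigma3 W).drop (3 * j + 2) := by
  have hu := unif_sigma3
  rw [occ_iff (by simp)] at h
  obtain ⟨hl, hp⟩ := h
  simp only [List.length_cons, List.length_nil] at hl
  have e0 := hp 0 (by norm_num)
  have e1 := hp 1 (by norm_num)
  simp only [List.getD] at e0 e1
  rw [occ_iff (by simp)]
  constructor
  · rw [length_wordMap hu]
    simp only [List.length_cons, List.length_nil]
    omega
  · intro i hi
    simp only [List.length_cons, List.length_nil] at hi
    interval_cases i
    · rw [show 3 * j + 2 + 0 = 3 * j + 2 by omega,
        getD_one_block hu (by omega : j < W.length) (by norm_num : (2:ℕ) < 3)]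
      rw [show W.getD j 0 = 2 from by simpa using e0]
      rfl
    · rw [show 3 * j + 2 + 1 = 3 * (j+1) + 0 by omega,
        getD_one_block hu (by omega : j + 1 < W.length) (by norm_num : (0:ℕ) < 3)]
      rw [show W.getD (j+1) 0 = 0 from by simpa using e1]
      rfl

lemma ca_pow_back : ∀ (e : ℕ) (W : List (Fin 3)) (p : ℕ),
    [2, 0] <+: (wordMap (powM sigma3 e) W).drop p →
    ∃ j, p = 3 ^ e * (j + 1) - 1 ∧ [2, 0] <+: W.drop j := by
  intro e
  induction e with
  | zero =>
    intro W p h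
    rw [show powM sigma3 0 = fun b => [b] from rfl, wordMap_one] at h
    exact ⟨p, by omega, h⟩
  | succ e ih =>
    intro W p h
    rw [show powM sigma3 (e+1) = compM sigma3 (powM sigma3 e) from rfl,
      wordMap_compM] at h
    obtain ⟨j', hj', hca⟩ := caL_sigma h
    obtain ⟨j, hj, hca'⟩ := ih W j' hca
    refine ⟨j, ?_, hca'⟩
    have hE : 1 ≤ 3 ^ e * (j + 1) := Nat.one_le_iff_ne_zero.2 (by positivity)
    have hps : 3 ^ (e+1) * (j + 1) = 3 * (3 ^ e * (j + 1)) := by rw [pow_succ]; ring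
    omega

lemma ca_fwd_pow : ∀ (e : ℕ) (W : List (Fin 3)) (j : ℕ),
    [2, 0] <+: W.drop j →
    [2, 0] <+: (wordMap (powM sigma3 e) W).drop (3 ^ e * (j + 1) - 1) := by
  intro e
  induction e with
  | zero =>
    intro W j h
    rw [show powM sigma3 0 = fun b => [b] from rfl, wordMap_one]
    simpa using h
  | succ e ih =>
    intro W j h
    rw [show powM sigma3 (e+1) = compM sigma3 (powM sigma3 e) from rfl, wordMap_compM]
    have := ca_fwd_sigma (ih W j h)
    have hE : 1 ≤ 3 ^ e * (j + 1) := Nat.one_le_iff_ne_zero.2 (by positivity)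
    rw [show 3 * (3 ^ e * (j + 1) - 1) + 2 = 3 ^ (e+1) * (j + 1) - 1 by
      rw [pow_succ]
      have h3 : 3 ^ e * 3 * (j+1) = 3 * (3 ^ e * (j + 1)) := by ring
      omega] at this
    exact this

end Marker
section Tower

open List

/-- One level of the directive sequence: `blk k = σ^k τ`. -/
def blk (k : ℕ) : Fin 3 → List (Fin 3) := compM (powM sigma3 k) tau3

/-- `Ln n = |ρ(n)(d)| = 3^{n(n+3)/2}`. -/
def Ln : ℕ → ℕ
  | 0 => 1
  | n + 1 => Ln n * 3 ^ (n + 2)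

/-- Tail chain `tl m l = σ^{m+1}τ σ^{m+2}τ ⋯ σ^{m+l}τ`. -/
def tl : ℕ → ℕ → Fin 3 → List (Fin 3)
  | _, 0 => fun b => [b]
  | m, l + 1 => compM (blk (m + 1)) (tl (m + 1) l)

lemma rho_succ (n : ℕ) : rho (n + 1) = compM (rho n) (blk (n + 1)) := rfl

lemma rho_decomp : ∀ (l m : ℕ), rho (m + l) = compM (rho m) (tl m l) := by
  intro l
  induction l with
  | zero => intro m; rw [show tl m 0 = fun b => [b] from rfl, compM_unit_right]; rfl
  | succ l ih =>
    intro m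
    have h1 : m + (l + 1) = (m + 1) + l := by omega
    rw [h1, ih (m + 1), rho_succ, compM_assoc]
    rfl

lemma unif_powM : ∀ e, UnifM (powM sigma3 e) (3 ^ e) := by
  intro e
  induction e with
  | zero => intro d; rfl
  | succ e ih =>
    intro d
    show (wordMap sigma3 (powM sigma3 e d)).length = 3 ^ (e + 1)
    rw [length_wordMap unif_sigma3, ih d, pow_succ]
    ring

lemma unif_compM {φ ψ : Fin 3 → List (Fin 3)} {L M : ℕ}
    (h1 : UnifM φ L) (h2 : UnifM ψ M) : UnifM (compM φ ψ) (L * M) := by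
  intro d
  show (wordMap φ (ψ d)).length = L * M
  rw [length_wordMap h1, h2 d]

lemma unif_blk (k : ℕ) : UnifM (blk k) (3 ^ (k + 1)) := by
  have := unif_compM (unif_powM k) unif_tau3
  rw [pow_succ]
  exact this

lemma recog_one : Recog (fun b => [b]) 1 := by
  refine ⟨fun d => rfl, ?_⟩
  intro W Z p hZ h
  rw [wordMap_one, wordMap_one] at h
  exact ⟨p, by omega, h⟩

lemma recog_compM {φ ψ : Fin 3 → List (Fin 3)} {L M : ℕ}
    (h1 : Recog φ L) (h2 : Recog ψ M) (hM : 1 ≤ M) : Recog (compM φ ψ) (L * M) := by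
  obtain ⟨u1, r1⟩ := h1
  obtain ⟨u2, r2⟩ := h2
  refine ⟨unif_compM u1 u2, ?_⟩
  intro W Z p hZ h
  rw [wordMap_compM, wordMap_compM] at h
  obtain ⟨j, hp, h'⟩ := r1 (wordMap ψ W) (wordMap ψ Z) p
    (by rw [length_wordMap u2]; calc 2 = 1 * 2 := by ring
        _ ≤ M * Z.length := Nat.mul_le_mul hM hZ) h
  obtain ⟨i, hj, h''⟩ := r2 W Z j hZ h'
  exact ⟨i, by rw [hp, hj]; ring, h''⟩

lemma recog_powM : ∀ e, Recog (powM sigma3 e) (3 ^ e) := by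
  intro e
  induction e with
  | zero => exact recog_one
  | succ e ih =>
    have := recog_compM (recogBase (Or.inl rfl)) ih (Nat.one_le_iff_ne_zero.2 (by positivity))
    rw [show (3 : ℕ) * 3 ^ e = 3 ^ (e + 1) from by rw [pow_succ]; ring] at this
    exact this

lemma recog_blk (k : ℕ) : Recog (blk k) (3 ^ (k + 1)) := by
  have := recog_compM (recog_powM k) (recogBase (Or.inr rfl)) (by norm_num)
  rw [← pow_succ] at this
  exact this

lemma recog_rho : ∀ n, Recog (rho n) (Ln n) := by
  intro n
  induction n with
  | zero => exact recog_one
  | succ n ih =>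
    rw [rho_succ]
    exact recog_compM ih (recog_blk (n + 1)) (Nat.one_le_iff_ne_zero.2 (by positivity))

lemma Ln_ge (n : ℕ) : n + 1 ≤ Ln n := by
  induction n with
  | zero => simp [Ln]
  | succ n ih =>
    have h3 : 3 ≤ 3 ^ (n + 2) := by
      calc (3:ℕ) = 3 ^ 1 := by norm_num
        _ ≤ 3 ^ (n + 2) := Nat.pow_le_pow_right (by norm_num) (by omega)
    calc n + 2 ≤ (n + 1) * 3 := by omega
      _ ≤ Ln n * 3 := Nat.mul_le_mul_right 3 ih
      _ ≤ Ln n * 3 ^ (n + 2) := Nat.mul_le_mul_left _ h3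
      _ = Ln (n + 1) := rfl

lemma Ln_pos (n : ℕ) : 0 < Ln n := by have := Ln_ge n; omega

lemma length_rho (n : ℕ) : (rho n 0).length = Ln n := (recog_rho n).1 0

/-- Occurrences of `ca` in a `blk k`-image sit at `-1 (mod 3^{k+1})`. -/
lemma fact1 {k : ℕ} {V : List (Fin 3)} {p : ℕ}
    (h : [2, 0] <+: (wordMap (blk k) V).drop p) :
    p % 3 ^ (k + 1) = 3 ^ (k + 1) - 1 := by
  rw [show blk k = compM (powM sigma3 k) tau3 from rfl, wordMap_compM] at h
  obtain ⟨j, hj, hca⟩ := ca_pow_back k _ _ h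
  have hmod := caL_tau hca
  obtain ⟨t, ht⟩ : ∃ t, j = 3 * t + 2 := ⟨j / 3, by omega⟩
  subst ht
  have hE : 1 ≤ 3 ^ k := Nat.one_le_iff_ne_zero.2 (by positivity)
  have h2 : 1 ≤ 3 ^ (k + 1) := Nat.one_le_iff_ne_zero.2 (by positivity)
  have hp : p = 3 ^ (k + 1) * t + (3 ^ (k + 1) - 1) := by
    have h1 : 3 ^ k * (3 * t + 2 + 1) = 3 ^ (k + 1) * t + 3 ^ (k + 1) := by
      rw [pow_succ]; ring
    omega
  rw [hp, Nat.add_comm, Nat.add_mul_mod_self_left]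
  exact Nat.mod_eq_of_lt (by omega)

lemma pow_head : ∀ (e : ℕ) (U : List (Fin 3)), 0 < U.length → U.getD 0 0 = 0 →
    0 < (wordMap (powM sigma3 e) U).length ∧ (wordMap (powM sigma3 e) U).getD 0 0 = 0 := by
  intro e
  induction e with
  | zero => intro U h1 h2; rw [show powM sigma3 0 = fun b => [b] from rfl, wordMap_one]; exact ⟨h1, h2⟩
  | succ e ih =>
    intro U h1 h2
    obtain ⟨ih1, ih2⟩ := ih U h1 h2
    rw [show powM sigma3 (e+1) = compM sigma3 (powM sigma3 e) from rfl, wordMap_compM]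
    constructor
    · rw [length_wordMap unif_sigma3]; omega
    · have h00 := getD_one_block unif_sigma3 (q := 0) ih1 (t := 0) (by norm_num)
      simp only [Nat.mul_zero, Nat.zero_add, Nat.add_zero] at h00
      rw [h00, ih2]
      rfl

lemma tau3_zero : tau3 0 = [0, 1, 2] := rfl

lemma blk_head (k : ℕ) : 0 < (blk k 0).length ∧ (blk k 0).getD 0 0 = 0 := by
  show 0 < (wordMap (powM sigma3 k) (tau3 0)).length ∧ _
  exact pow_head k (tau3 0) (by rw [tau3_zero]; norm_num) (by rw [tau3_zero]; rfl)

/-- Existence of the marker `ca` in the level-`m` tail word. -/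
lemma exist_ca (m : ℕ) : [2, 0] <+: (tl m 2 0).drop (3 ^ (m + 2) - 1) := by
  have hV : tl m 2 0 = wordMap (blk (m + 1)) (blk (m + 2) 0) := by
    show wordMap (blk (m+1)) (tl (m+1) 1 0) = _
    congr 1
    show wordMap (blk (m+2)) ((fun b => [b]) (0 : Fin 3)) = _
    simp [wordMap_cons, wordMap_nil]
  set V := blk (m + 2) 0 with hVdef
  have hV0 : V.getD 0 0 = 0 := (blk_head (m + 2)).2
  have hVl : 2 ≤ V.length := by
    have h1 : V.length = 3 ^ (m + 3) := unif_blk (m + 2) 0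
    have h2 : 2 ≤ 3 ^ (m + 3) := by
      calc 2 ≤ 3 ^ 1 := by norm_num
        _ ≤ 3 ^ (m + 3) := Nat.pow_le_pow_right (by norm_num) (by omega)
    omega
  -- ca at position 2 in τ(V)
  have hca_tau : [2, 0] <+: (wordMap tau3 V).drop 2 := by
    rw [occ_iff (by simp)]
    constructor
    · rw [length_wordMap unif_tau3]
      simp only [List.length_cons, List.length_nil]
      omega
    · intro i hi
      simp only [List.length_cons, List.length_nil] at hi
      interval_cases i
      · have := getD_one_block unif_tau3 (q := 0) (W := V) (by omega) (t := 2) (by norm_num)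
        simp only [Nat.mul_zero, Nat.zero_add] at this
        rw [show (2:ℕ) + 0 = 2 by rfl, this, hV0]
        rfl
      · have := getD_one_block unif_tau3 (q := 1) (W := V) (by omega) (t := 0) (by norm_num)
        simp only [Nat.mul_one] at this
        rw [show (2:ℕ) + 1 = 3 * 1 + 0 by rfl]
        rw [getD_one_block unif_tau3 (q := 1) (W := V) (by omega) (t := 0) (by norm_num)]
        exact (by decide : ∀ d : Fin 3, (tau3 d).getD 0 0 = 0) _
  have := ca_fwd_pow (m + 1) (wordMap tau3 V) 2 hca_tau
  rw [hV, show blk (m+1) = compM (powM sigma3 (m+1)) tau3 from rfl, wordMap_compM]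
  rw [show 3 ^ (m + 1) * (2 + 1) = 3 ^ (m + 2) from by rw [pow_succ]; ring] at this
  exact this

end Tower
section Seq

open List

lemma rho_nested (n : ℕ) : rho n 0 <+: rho (n + 1) 0 := by
  have hh := blk_head (n + 1)
  obtain ⟨a, t, hat⟩ : ∃ a t, blk (n + 1) 0 = a :: t := by
    cases hb : blk (n + 1) 0 with
    | nil => rw [hb] at hh; simp at hh
    | cons a t => exact ⟨a, t, rfl⟩
  have ha : a = 0 := by rw [hat] at hh; simpa using hh.2
  subst ha
  show rho n 0 <+: compM (rho n) (blk (n + 1)) 0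
  show rho n 0 <+: wordMap (rho n) (blk (n + 1) 0)
  rw [hat, wordMap_cons]
  exact ⟨wordMap (rho n) t, by simp⟩

lemma rho_mono {n n' : ℕ} (h : n ≤ n') : rho n 0 <+: rho n' 0 := by
  induction n', h using Nat.le_induction with
  | base => exact List.prefix_refl _
  | succ n' _ ih => exact ih.trans (rho_nested n')

lemma prefix_drop_lift {u v v' : List (Fin 3)} {P : ℕ} (hne : u ≠ [])
    (hvv : v <+: v') (h : u <+: v.drop P) : u <+: v'.drop P := by
  obtain ⟨t, rfl⟩ := hvv
  have hl := h.length_le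
  rw [List.length_drop] at hl
  have hu' : 0 < u.length := List.length_pos_iff.2 hne
  have hP : P ≤ v.length := by omega
  rw [List.drop_append_of_le_length hP]
  exact h.trans (List.prefix_append _ _)

variable (x : ℕ → Fin 3)

/-- Windows of `x` agree with `rho n 0` for all large `n`. -/
lemma XA (hx : ConvergesTo (fun n => rho n 0) 0 x) (L : ℕ) : ∃ N, ∀ n, N ≤ n →
    L ≤ (rho n 0).length ∧ ∀ m < L, (rho n 0).getD m 0 = x m := by
  choose f hf using hx
  refine ⟨max L ((Finset.range L).sup f), fun n hn => ⟨?_, ?_⟩⟩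
  · have h1 : L ≤ n := le_trans (le_max_left _ _) hn
    have := Ln_ge n
    rw [length_rho]; omega
  · intro m hm
    have h1 : f m ≤ n :=
      le_trans (le_trans (Finset.le_sup (Finset.mem_range.2 hm)) (le_max_right _ _)) hn
    have h2 := hf m n h1
    have hmlt : m < (rho n 0).length := by
      rw [length_rho]; have h3 : L ≤ n := le_trans (le_max_left _ _) hn
      have := Ln_ge n; omega
    rwa [show repSeq (rho n 0) 0 m = (rho n 0).getD (m % (rho n 0).length) 0 from rfl,
      Nat.mod_eq_of_lt hmlt] at h2

lemma occursAt_iff_getD {u : List (Fin 3)} {P : ℕ} :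
    OccursAt x u P ↔ ∀ i < u.length, x (P + i) = u.getD i 0 := by
  constructor
  · intro h i hi
    have := h ⟨i, hi⟩
    rwa [List.get_eq_getElem, ← List.getD_eq_getElem _ _ hi] at this
  · intro h k
    have := h k k.isLt
    rwa [List.get_eq_getElem, ← List.getD_eq_getElem _ _ k.isLt]

/-- Transfer an occurrence in some `rho n 0` to an occurrence in `x`. -/
lemma occ_transfer_to (hx : ConvergesTo (fun n => rho n 0) 0 x) {u : List (Fin 3)} {P n : ℕ} (hne : u ≠ [])
    (h : u <+: (rho n 0).drop P) : OccursAt x u P := by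
  obtain ⟨N, hN⟩ := XA x hx (P + u.length)
  set n' := max n N with hn'
  have hpre : u <+: (rho n' 0).drop P :=
    prefix_drop_lift hne (rho_mono (le_max_left _ _)) h
  obtain ⟨hlen, hpt⟩ := hN n' (le_max_right _ _)
  obtain ⟨h1, h2⟩ := (occ_iff hne).mp hpre
  rw [occursAt_iff_getD]
  intro i hi
  rw [← h2 i hi]
  exact (hpt (P + i) (by omega)).symm

/-- Transfer an occurrence in `x` to an occurrence in `rho n 0`, for a suitable large `n`. -/
lemma occ_to_rho (hx : ConvergesTo (fun n => rho n 0) 0 x) {u : List (Fin 3)} {P : ℕ} (hne : u ≠ [])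
    (h : OccursAt x u P) (n₀ : ℕ) : ∃ n, n₀ ≤ n ∧ u <+: (rho n 0).drop P := by
  obtain ⟨N, hN⟩ := XA x hx (P + u.length)
  set n' := max n₀ N with hn'
  refine ⟨n', le_max_left _ _, ?_⟩
  obtain ⟨hlen, hpt⟩ := hN n' (le_max_right _ _)
  rw [occ_iff hne]
  refine ⟨by omega, fun i hi => ?_⟩
  rw [hpt (P + i) (by omega)]
  exact (occursAt_iff_getD x).mp h i hi

end Seq

section Directive

open List

/-- `Sfun n = n(n+3)/2` : the index of the `n`-th block boundary. -/
def Sfun : ℕ → ℕ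
  | 0 => 0
  | n + 1 => Sfun n + n + 2

open Classical in
/-- The directive sequence `σ, τ, σ, σ, τ, σ, σ, σ, τ, …`. -/
noncomputable def sseq : ℕ → Fin 3 → List (Fin 3) :=
  fun n => if ∃ k, n + 1 = Sfun k then tau3 else sigma3

lemma sseq_cases (n : ℕ) : sseq n = sigma3 ∨ sseq n = tau3 := by
  by_cases h : ∃ k, n + 1 = Sfun k
  · right; simp only [sseq]; rw [if_pos h]
  · left; simp only [sseq]; rw [if_neg h]

lemma Sfun_mono : Monotone Sfun := by
  apply monotone_nat_of_le_succ
  intro n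
  show Sfun n ≤ Sfun n + n + 2
  omega

lemma Sfun_ge (n : ℕ) : n ≤ Sfun n := by
  induction n with
  | zero => simp [Sfun]
  | succ n ih => show n + 1 ≤ Sfun n + n + 2; omega

lemma sseq_sigma (n t : ℕ) (ht : t < n + 1) : sseq (Sfun n + t) = sigma3 := by
  simp only [sseq]
  rw [if_neg]
  rintro ⟨k, hk⟩
  rcases le_or_gt k n with h | h
  · have := Sfun_mono h; omega
  · have h2 : n + 1 ≤ k := h
    have := Sfun_mono h2
    have h3 : Sfun (n + 1) = Sfun n + n + 2 := rfl
    omega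

lemma sseq_tau (n : ℕ) : sseq (Sfun n + n + 1) = tau3 := by
  simp only [sseq]
  rw [if_pos ⟨n + 1, by show _ = Sfun n + n + 2; omega⟩]

lemma chain_succ (σ : ℕ → Fin 3 → List (Fin 3)) (r p : ℕ) :
    chain σ r (p + 1) = compM (chain σ r p) (σ (r + p)) := rfl

lemma chain_add (σ : ℕ → Fin 3 → List (Fin 3)) (r M : ℕ) :
    ∀ P, chain σ r (M + P) = compM (chain σ r M) (chain σ (r + M) P) := by
  intro P
  induction P with
  | zero => rw [show chain σ (r + M) 0 = fun b => [b] from rfl, compM_unit_right]; rfl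
  | succ P ih =>
    rw [show M + (P + 1) = (M + P) + 1 from rfl, chain_succ, ih, compM_assoc]
    rw [chain_succ, show r + (M + P) = r + M + P from by omega]

lemma chain_const (r : ℕ) : ∀ p, (∀ t, t < p → sseq (r + t) = sigma3) →
    chain sseq r p = powM sigma3 p := by
  intro p
  induction p with
  | zero => intro _; rfl
  | succ p ih =>
    intro h
    rw [chain_succ, ih (fun t ht => h t (by omega)), h p (by omega), powM_succ_right]

lemma chain_blk (n : ℕ) : chain sseq (Sfun n) (n + 2) = blk (n + 1) := by
  rw [show n + 2 = (n + 1) + 1 from rfl, chain_succ,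
    chain_const (Sfun n) (n + 1) (fun t ht => sseq_sigma n t ht),
    show Sfun n + (n + 1) = Sfun n + n + 1 from by omega, sseq_tau]
  rfl

lemma chain_rho : ∀ n, chain sseq 0 (Sfun n) = rho n := by
  intro n
  induction n with
  | zero => rfl
  | succ n ih =>
    have h1 : Sfun (n + 1) = Sfun n + (n + 2) := by show Sfun n + n + 2 = _; omega
    rw [h1, chain_add, Nat.zero_add, ih, chain_blk]
    rfl

lemma sseq_unif (n : ℕ) : UnifM (sseq n) 3 := by
  rcases sseq_cases n with h | h <;> rw [h]
  · exact unif_sigma3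
  · exact unif_tau3

lemma chain_unif : ∀ M, UnifM (chain sseq 0 M) (3 ^ M) := by
  intro M
  induction M with
  | zero => intro d; rfl
  | succ M ih =>
    intro d
    rw [chain_succ]
    show (wordMap (chain sseq 0 M) (sseq (0 + M) d)).length = 3 ^ (M + 1)
    rw [length_wordMap ih, sseq_unif (0 + M) d, pow_succ]

lemma sseq_head (M : ℕ) : ∃ t, sseq M 0 = 0 :: t := by
  rcases sseq_cases M with h | h <;> rw [h]
  · exact ⟨[2, 1], rfl⟩
  · exact ⟨[1, 2], rfl⟩

lemma chain_nested (M : ℕ) : chain sseq 0 M 0 <+: chain sseq 0 (M + 1) 0 := by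
  obtain ⟨t, ht⟩ := sseq_head (0 + M)
  rw [chain_succ]
  show chain sseq 0 M 0 <+: wordMap (chain sseq 0 M) (sseq (0 + M) 0)
  rw [ht, wordMap_cons]
  exact ⟨wordMap (chain sseq 0 M) t, by simp⟩

lemma chain_mono {M M' : ℕ} (h : M ≤ M') : chain sseq 0 M 0 <+: chain sseq 0 M' 0 := by
  induction M', h using Nat.le_induction with
  | base => exact List.prefix_refl _
  | succ M' _ ih => exact ih.trans (chain_nested M')

lemma chain_prefix_rho (M : ℕ) : chain sseq 0 M 0 <+: rho M 0 := by
  have := chain_mono (Sfun_ge M)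
  rwa [chain_rho] at this

end Directive
section Seg

open List

lemma getD_append_ge (u v : List (Fin 3)) (i : ℕ) (h : u.length ≤ i) :
    (u ++ v).getD i 0 = v.getD (i - u.length) 0 := by
  simp [List.getD_eq_getElem?_getD, List.getElem?_append_right h]

lemma seg_getD (x : ℕ → Fin 3) (a L i : ℕ) (hi : i < L) :
    ((List.range L).map (fun t => x (a + t))).getD i 0 = x (a + i) := by
  rw [List.getD_eq_getElem _ _ (by simpa using hi)]
  simp

end Seg
/-- The sequence `x = lim στσ²τ⋯σⁿτ(aaa⋯)` is a primitive S-adic sequence over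
`S = {σ, τ}` but is not linearly recurrent. -/
theorem counterexample_primitive_sadic_not_lr (x : ℕ → Fin 3)
    (hx : ConvergesTo (fun n => rho n 0) 0 x) :
    (∃ (σseq : ℕ → Fin 3 → List (Fin 3)) (Aseq : ℕ → Set (Fin 3)) (s0 : ℕ),
        (∀ n, σseq n = sigma3 ∨ σseq n = tau3) ∧
        GeneratesSAdic σseq Aseq 0 x ∧
        PrimitiveWith σseq Aseq s0) ∧
      ¬ LinearlyRecurrent x := by
  constructor
  · -- primitive S-adic
    refine ⟨sseq, fun _ => Set.univ, 2, sseq_cases,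
      ⟨⟨fun n => Set.mem_univ 0, fun n b _ c _ => Set.mem_univ c⟩, ?_⟩, ?_⟩
    · -- convergence
      intro m
      obtain ⟨N₁, hN₁⟩ := XA x hx (m + 1)
      refine ⟨m + N₁, fun n hn => ?_⟩
      have hlW : (chain sseq 0 (n + 1) 0).length = 3 ^ (n + 1) := chain_unif (n + 1) 0
      have hmW : m < (chain sseq 0 (n + 1) 0).length := by
        rw [hlW]
        have := Nat.lt_pow_self (n := n + 1) (by norm_num : 1 < 3)
        omega
      show repSeq (chain sseq 0 (n + 1) 0) 0 m = x m
      rw [show repSeq (chain sseq 0 (n + 1) 0) 0 m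
          = (chain sseq 0 (n + 1) 0).getD (m % (chain sseq 0 (n + 1) 0).length) 0 from rfl,
        Nat.mod_eq_of_lt hmW]
      have hpref : chain sseq 0 (n + 1) 0 <+: rho (max (n + 1) N₁) 0 :=
        (chain_prefix_rho (n + 1)).trans (rho_mono (le_max_left _ _))
      obtain ⟨hlen', hpt'⟩ := hN₁ (max (n + 1) N₁) (le_max_right _ _)
      rw [← prefix_getD hpref hmW]
      exact hpt' m (by omega)
    · -- primitivity with constant 2
      intro r b _ c _
      have hch : chain sseq (r + 1) 2 c = wordMap (sseq (r + 1)) (sseq (r + 2) c) := by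
        have h1 : chain sseq (r + 1) 2 = compM (chain sseq (r + 1) 1) (sseq (r + 1 + 1)) := rfl
        have h2 : chain sseq (r + 1) 1 = compM (chain sseq (r + 1) 0) (sseq (r + 1 + 0)) := rfl
        rw [h1, h2, show chain sseq (r + 1) 0 = fun b => [b] from rfl, compM_unit_left]
        rfl
      rw [hch]
      rcases sseq_cases (r + 1) with h1 | h1 <;> rcases sseq_cases (r + 2) with h2 | h2 <;>
        rw [h1, h2]
      · exact (by decide : ∀ b c : Fin 3, b ∈ wordMap sigma3 (sigma3 c)) b c
      · exact (by decide : ∀ b c : Fin 3, b ∈ wordMap sigma3 (tau3 c)) b c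
      · exact (by decide : ∀ b c : Fin 3, b ∈ wordMap tau3 (sigma3 c)) b c
      · exact (by decide : ∀ b c : Fin 3, b ∈ wordMap tau3 (tau3 c)) b c
  · -- not linearly recurrent
    rintro ⟨K, hUR, hbound⟩
    classical
    set m := 2 * K with hm
    set u := wordMap (rho m) [2, 0] with hu
    have hlu : u.length = Ln m * 2 := by
      rw [hu, length_wordMap (recog_rho m).1]; rfl
    have hLm := Ln_pos m
    have hune : u ≠ [] := by
      intro h0
      rw [h0] at hlu; simp at hlu; omega
    have hrho2 : rho (m + 2) 0 = wordMap (rho m) (tl m 2 0) := by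
      rw [rho_decomp 2 m]; rfl
    have hP0r : u <+: (rho (m + 2) 0).drop (Ln m * (3 ^ (m + 2) - 1)) := by
      rw [hrho2, ← wordMap_drop (recog_rho m).1]
      exact prefix_wordMap (rho m) (exist_ca m)
    set P0 := Ln m * (3 ^ (m + 2) - 1) with hP0def
    have hP0 : OccursAt x u P0 := occ_transfer_to x hx hune hP0r
    have hLn1 : Ln (m + 1) = Ln m * 3 ^ (m + 2) := rfl
    have hE2 : 1 ≤ 3 ^ (m + 2) := Nat.one_le_iff_ne_zero.2 (by positivity)
    -- rigidity of occurrences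
    have hmod : ∀ P, OccursAt x u P → P % Ln (m + 1) = Ln (m + 1) - Ln m := by
      intro P hP
      obtain ⟨n, hn2, hpref⟩ := occ_to_rho x hx hune hP (m + 2)
      obtain ⟨l, rfl⟩ : ∃ l, n = m + (l + 2) := ⟨n - m - 2, by omega⟩
      rw [show rho (m + (l + 2)) 0 = wordMap (rho m) (tl m (l + 2) 0) from
        by rw [rho_decomp]; rfl] at hpref
      obtain ⟨i, hPi, hca⟩ := (recog_rho m).2 (tl m (l + 2) 0) [2, 0] P (by norm_num) hpref
      rw [show tl m (l + 2) 0 = wordMap (blk (m + 1)) (tl (m + 1) (l + 1) 0) from rfl] at hca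
      have hi := fact1 hca
      rw [show m + 1 + 1 = m + 2 from rfl] at hi
      rw [hPi, hLn1, Nat.mul_mod_mul_left, hi]
      have h1 : Ln m * (3 ^ (m + 2) - 1) + Ln m = Ln m * 3 ^ (m + 2) := by
        have h2 : (3 ^ (m + 2) - 1) + 1 = 3 ^ (m + 2) := by omega
        calc Ln m * (3 ^ (m + 2) - 1) + Ln m = Ln m * ((3 ^ (m + 2) - 1) + 1) := by ring
          _ = Ln m * 3 ^ (m + 2) := by rw [h2]
      omega
    have hmodP0 := hmod P0 hP0
    -- the next occurrence after P0
    obtain ⟨M, hM⟩ := hUR u ⟨P0, hP0⟩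
    obtain ⟨j, hj1, _, hj3⟩ := hM (P0 + 1)
    have hex : ∃ q, P0 < q ∧ OccursAt x u q := ⟨j, by omega, hj3⟩
    set Q := Nat.find hex with hQdef
    obtain ⟨hQ1, hQ2⟩ := Nat.find_spec hex
    have hQmin : ∀ q, P0 < q → q < Q → ¬ OccursAt x u q := by
      intro q h1 h2 hocc
      exact Nat.find_min hex h2 ⟨h1, hocc⟩
    have hmodQ := hmod Q hQ2
    have hGpos : 0 < Ln (m + 1) := Ln_pos (m + 1)
    have hdvd : Ln (m + 1) ∣ Q - P0 :=
      (Nat.modEq_iff_dvd' (le_of_lt hQ1)).mp (hmodP0.trans hmodQ.symm)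
    have hgap : Ln (m + 1) ≤ Q - P0 := Nat.le_of_dvd (by omega) hdvd
    -- the return word
    set w := (List.range (Q - P0)).map (fun t => x (P0 + t)) with hw
    have hlw : w.length = Q - P0 := by rw [hw]; simp
    have hwle : u.length ≤ w.length := by
      rw [hlw, hlu]
      have h3 : 2 ≤ 3 ^ (m + 2) := by
        have h5 := Nat.pow_le_pow_right (by norm_num : 1 ≤ 3) (by omega : 1 ≤ m + 2)
        simp only [pow_one] at h5
        omega
      have h4 : Ln m * 2 ≤ Ln m * 3 ^ (m + 2) := Nat.mul_le_mul (le_refl _) h3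
      rw [hLn1] at hgap
      omega
    have hptwu : ∀ s, s < w.length + u.length → x (P0 + s) = (w ++ u).getD s 0 := by
      intro s hs
      rcases lt_or_ge s w.length with hsw | hsw
      · rw [getD_append_lt _ _ _ hsw]
        conv_rhs => rw [hw]
        exact (seg_getD x P0 (Q - P0) s (by omega)).symm
      · rw [getD_append_ge _ _ _ hsw]
        have hb : s - w.length < u.length := by omega
        have h4 := (occursAt_iff_getD x).mp hQ2 (s - w.length) hb
        rw [← h4]
        congr 1
        omega
    have hoccwu : OccursAt x (w ++ u) P0 := by
      rw [occursAt_iff_getD]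
      intro i hi
      rw [List.length_append] at hi
      exact hptwu i hi
    have hprefu0 : u <+: (w ++ u).drop 0 := by
      rw [occ_iff hune]
      refine ⟨by rw [List.length_append]; omega, fun i hi => ?_⟩
      rw [Nat.zero_add, ← hptwu i (by omega)]
      exact (occursAt_iff_getD x).mp hP0 i hi
    have hprefu : u <+: w ++ u := by simpa using hprefu0
    have hcount : OccCountEq u (w ++ u) 2 := by
      have hset : {i : ℕ | u <+: (w ++ u).drop i} = {0, w.length} := by
        ext i
        simp only [Set.mem_setOf_eq, Set.mem_insert_iff, Set.mem_singleton_iff]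
        constructor
        · intro h
          obtain ⟨h1, h2⟩ := (occ_iff hune).mp h
          rw [List.length_append] at h1
          have hile : i ≤ w.length := by omega
          have hocc : OccursAt x u (P0 + i) := by
            rw [occursAt_iff_getD]
            intro t ht
            rw [show P0 + i + t = P0 + (i + t) from by omega, hptwu (i + t) (by omega)]
            exact h2 t ht
          by_contra hcon
          push_neg at hcon
          obtain ⟨hi0, hiw⟩ := hcon
          exact hQmin (P0 + i) (by omega) (by omega) hocc
        · rintro (rfl | rfl)
          · exact hprefu0
          · rw [List.drop_left]
      rw [OccCountEq, hset]
      exact Set.ncard_pair (by omega)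
    have hRW : IsReturnWord x u w := ⟨⟨P0, hoccwu⟩, hprefu, hcount⟩
    have hle := hbound u w hRW
    rw [hlw, hlu] at hle
    have h2K : m + 2 < 3 ^ (m + 2) := Nat.lt_pow_self (n := m + 2) (by norm_num)
    have hlt : K * (Ln m * 2) + 1 ≤ Ln m * 3 ^ (m + 2) := by
      calc K * (Ln m * 2) + 1 ≤ Ln m * (2 * K) + Ln m := by
            have hKL : K * (Ln m * 2) = Ln m * (2 * K) := by ring
            omega
        _ = Ln m * (2 * K + 1) := by ring
        _ ≤ Ln m * 3 ^ (m + 2) := Nat.mul_le_mul (le_refl _) (by omega)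
    omega

end DurandLR
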